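/- Let d ≥ 1, N ≥ 1, n = N^d, β ∈ ℝ, and let f : [0,1]^d → ℝ, f(x) = β·(x_1 + ⋯ + x_d). Partition X = [0,1]^d into the n axis-aligned subcubes of side length 1/N obtained by dividing each coordinate interval into N equal parts, and let g_n : X → ℝ be the piecewise constant function that on each subcube equals the value of f at the center of that subcube. Then L_f − L_{g_n} = d · r(β/N), where r(t) := log( ∫_{−1/2}^{1/2} exp(t·u) du ). -/

import Mathlib

open MeasureTheory Real

noncomputable section

/-- The unit cube `[0,1]^d` in `ℝ^d`. -/
def cube (d : ℕ) : Set (Fin d → ℝ) := Set.Icc 0 1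

/-- The partition function `Z_f = ∫_X exp(f(x)) dx`. -/
def partZ {d : ℕ} (f : (Fin d → ℝ) → ℝ) : ℝ := ∫ x in cube d, Real.exp (f x)

/-- The log-partition function `L_f = log Z_f`. -/
def logPart {d : ℕ} (f : (Fin d → ℝ) → ℝ) : ℝ := Real.log (partZ f)

/-- The Gibbs measure `P_f` with density `exp(f(x))/Z_f` w.r.t. Lebesgue measure on the cube. -/
def gibbs {d : ℕ} (f : (Fin d → ℝ) → ℝ) : Measure (Fin d → ℝ) :=
  (volume.restrict (cube d)).withDensity fun x => ENNReal.ofReal (Real.exp (f x) / partZ f)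

/-- Essential supremum norm `‖h‖_∞` over the cube. -/
def supNormOn {d : ℕ} (h : (Fin d → ℝ) → ℝ) : ℝ :=
  essSup (fun x => |h x|) (volume.restrict (cube d))

/-- Total variation distance between two measures: `sup_A |P(A) − Q(A)|`. -/
def DTV {α : Type*} [MeasurableSpace α] (P Q : Measure α) : ℝ :=
  ⨆ A : {A : Set α // MeasurableSet A}, |(P A.1).toReal - (Q A.1).toReal|

/-- `f` is bounded on the cube. -/
def BddOnCube {d : ℕ} (f : (Fin d → ℝ) → ℝ) : Prop := ∃ C, ∀ x ∈ cube d, |f x| ≤ C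

/-- `r(t) = log(∫_{−1/2}^{1/2} e^{tu} du)`. -/
def rFun (t : ℝ) : ℝ := Real.log (∫ u in Set.Icc (-(1 : ℝ) / 2) (1 / 2), Real.exp (t * u))

/-- log-partition error of piecewise constant approximation for linear `f`.
With `n = N^d`, `f(x) = β (x_1 + ⋯ + x_d)`, and `g_n` the piecewise constant interpolation of
`f` at the centers of the `n` subcubes of side `1/N` (boundary points assigned via floor),
`L_f − L_{g_n} = d · r(β/N)`. -/

lemma cube_prod_indicator {d : ℕ} (F : ℝ → ℝ) (x : Fin d → ℝ) :
    (cube d).indicator (fun x => ∏ i, F (x i)) x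
      = ∏ i, (Set.Icc (0:ℝ) 1).indicator F (x i) := by
  by_cases hx : x ∈ cube d
  · rw [Set.indicator_of_mem hx]
    exact Finset.prod_congr rfl fun i _ =>
      (Set.indicator_of_mem (Set.mem_Icc.mpr ⟨hx.1 i, hx.2 i⟩) F).symm
  · rw [Set.indicator_of_notMem hx]
    have : ∃ i, x i ∉ Set.Icc (0:ℝ) 1 := by
      by_contra h
      push_neg at h
      exact hx ⟨fun i => (h i).1, fun i => (h i).2⟩
    obtain ⟨i, hi⟩ := this
    exact (Finset.prod_eq_zero (Finset.mem_univ i) (Set.indicator_of_notMem hi F)).symm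

lemma cube_integral_pow (d : ℕ) (F : ℝ → ℝ) :
    (∫ x in cube d, ∏ i, F (x i)) = (∫ t in Set.Icc (0:ℝ) 1, F t) ^ d := by
  have hm : MeasurableSet (cube d) := measurableSet_Icc
  rw [← integral_indicator hm]
  simp_rw [cube_prod_indicator F]
  rw [volume_pi, MeasureTheory.integral_fintype_prod_eq_pow (ι := Fin d) ((Set.Icc (0:ℝ) 1).indicator F),
    Fintype.card_fin, integral_indicator measurableSet_Icc]

lemma oneD_lin (β : ℝ) (hβ : β ≠ 0) :
    ∫ t in Set.Icc (0:ℝ) 1, Real.exp (β * t) = (Real.exp β - 1) / β := by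
  rw [MeasureTheory.integral_Icc_eq_integral_Ioc, ← intervalIntegral.integral_of_le zero_le_one,
    intervalIntegral.integral_comp_mul_left (fun u => Real.exp u) hβ]
  simp [integral_exp, smul_eq_mul]
  ring

lemma oneD_I (t : ℝ) (ht : t ≠ 0) :
    ∫ u in Set.Icc (-(1:ℝ)/2) (1/2), Real.exp (t * u)
      = (Real.exp (t/2) - Real.exp (-(t/2))) / t := by
  rw [MeasureTheory.integral_Icc_eq_integral_Ioc,
    ← intervalIntegral.integral_of_le (by norm_num : -(1:ℝ)/2 ≤ 1/2),
    intervalIntegral.integral_comp_mul_left (fun u => Real.exp u) ht]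
  rw [integral_exp, smul_eq_mul]
  rw [show t * (-(1:ℝ)/2) = -(t/2) by ring, show t * ((1:ℝ)/2) = t/2 by ring]
  ring

lemma ico_union (N : ℕ) (hN : 1 ≤ N) :
    Set.Ico (0:ℝ) 1 = ⋃ k ∈ Finset.range N, Set.Ico ((k:ℝ)/N) (((k:ℝ)+1)/N) := by
  have hN0 : (0:ℝ) < N := by exact_mod_cast hN
  ext t
  simp only [Set.mem_iUnion, Finset.mem_range, Set.mem_Ico, exists_prop]
  constructor
  · rintro ⟨h0, h1⟩
    have hNt : 0 ≤ (N:ℝ) * t := by positivity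
    refine ⟨⌊(N:ℝ)*t⌋₊, ?_, ?_, ?_⟩
    · exact (Nat.floor_lt hNt).mpr (by nlinarith)
    · rw [div_le_iff₀ hN0]
      exact le_of_le_of_eq (Nat.floor_le hNt) (mul_comm _ _)
    · rw [lt_div_iff₀ hN0]
      exact lt_of_eq_of_lt (mul_comm _ _) (Nat.lt_floor_add_one _)
  · rintro ⟨k, hk, h1, h2⟩
    have hk1 : ((k:ℝ)+1) ≤ N := by exact_mod_cast hk
    constructor
    · exact le_trans (by positivity) h1
    · calc t < ((k:ℝ)+1)/N := h2
        _ ≤ N/N := by gcongr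
        _ = 1 := div_self hN0.ne'

lemma floor_on_piece (N k : ℕ) (hk : k < N) {t : ℝ}
    (ht : t ∈ Set.Ico ((k:ℝ)/N) (((k:ℝ)+1)/N)) :
    min ⌊(N:ℝ)*t⌋₊ (N-1) = k := by
  have hN0 : (0:ℝ) < N := by exact_mod_cast Nat.pos_of_ne_zero (by omega)
  have h1 : (k:ℝ) ≤ (N:ℝ)*t := by
    have := ht.1; rw [div_le_iff₀ hN0] at this
    exact le_of_le_of_eq this (mul_comm _ _)
  have h2 : (N:ℝ)*t < (k:ℝ)+1 := by
    have := ht.2; rw [lt_div_iff₀ hN0] at this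
    exact lt_of_eq_of_lt (mul_comm _ _) this
  have hfl : ⌊(N:ℝ)*t⌋₊ = k := by
    rw [Nat.floor_eq_iff (le_trans (Nat.cast_nonneg k) h1)]
    exact ⟨h1, by exact_mod_cast h2⟩
  rw [hfl]
  omega

lemma oneD_pc (N : ℕ) (hN : 1 ≤ N) (β : ℝ) :
    (∫ t in Set.Icc (0:ℝ) 1,
        Real.exp (β * ((((min ⌊(N:ℝ)*t⌋₊ (N-1) : ℕ):ℝ) + 1/2)/N)))
      = ∑ k ∈ Finset.range N, Real.exp (β * (((k:ℝ) + 1/2)/N)) / N := by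
  have hN0 : (0:ℝ) < N := by exact_mod_cast hN
  rw [MeasureTheory.integral_Icc_eq_integral_Ico, ico_union N hN]
  rw [MeasureTheory.integral_biUnion_finset (Finset.range N)
      (fun k _ => measurableSet_Ico)
      ?_ ?_]
  · refine Finset.sum_congr rfl fun k hk => ?_
    have hkN := Finset.mem_range.mp hk
    rw [MeasureTheory.setIntegral_congr_fun measurableSet_Ico
        (fun t ht => by rw [floor_on_piece N k hkN ht])]
    rw [MeasureTheory.setIntegral_const, measureReal_def, Real.volume_Ico, smul_eq_mul,
      ENNReal.toReal_ofReal (by rw [div_sub_div_same]; norm_num)]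

    rw [show ((k:ℝ)+1)/N - (k:ℝ)/N = 1/N by rw [div_sub_div_same]; ring_nf]
    ring
  · intro i hi j hj hij
    rcases hij.lt_or_gt with h | h
    · simp only [Function.onFun]
      refine Set.Ico_disjoint_Ico.mpr ?_
      refine le_trans (min_le_left _ _) (le_trans ?_ (le_max_right _ _))
      gcongr
      exact_mod_cast h
    · simp only [Function.onFun]
      refine Set.Ico_disjoint_Ico.mpr ?_
      refine le_trans (min_le_right _ _) (le_trans ?_ (le_max_left _ _))
      gcongr
      exact_mod_cast h
  · intro k hk
    have hkN := Finset.mem_range.mp (by exact hk)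
    refine (Iff.mpr (MeasureTheory.integrableOn_const_iff (C := Real.exp (β * (((k:ℝ) + 1/2)/N))))
      (Or.inr ?_)).congr_fun (fun t ht => by rw [floor_on_piece N k hkN ht]) measurableSet_Ico
    rw [Real.volume_Ico]
    exact ENNReal.ofReal_lt_top

lemma key_identity (N : ℕ) (hN : 1 ≤ N) (β : ℝ) (hβ : β ≠ 0) :
    (Real.exp β - 1) / β =
      (∑ k ∈ Finset.range N, Real.exp (β * (((k:ℝ) + 1/2)/N)) / N) *
      ((Real.exp (β/N/2) - Real.exp (-(β/N/2))) / (β/N)) := by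
  have hN0 : (0:ℝ) < N := by exact_mod_cast hN
  set t := β / N with htdef
  have ht : t ≠ 0 := div_ne_zero hβ hN0.ne'
  have hne : Real.exp t ≠ 1 := fun h => ht ((Real.exp_eq_one_iff t).mp h)
  have hne0 : Real.exp t - 1 ≠ 0 := sub_ne_zero.mpr hne
  have htN : (N:ℝ) * t = β := by rw [htdef]; field_simp
  have hsum : (∑ k ∈ Finset.range N, Real.exp (β * (((k:ℝ) + 1/2)/N)) / N)
      = Real.exp (t/2) * ((Real.exp β - 1) / (Real.exp t - 1)) / N := by
    rw [← Finset.sum_div]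
    congr 1
    calc ∑ k ∈ Finset.range N, Real.exp (β * (((k:ℝ) + 1/2)/N))
        = ∑ k ∈ Finset.range N, Real.exp (t/2) * Real.exp t ^ k := by
          refine Finset.sum_congr rfl fun k _ => ?_
          rw [← Real.exp_nat_mul, ← Real.exp_add]
          congr 1
          rw [htdef]
          field_simp
          ring
      _ = Real.exp (t/2) * ∑ k ∈ Finset.range N, Real.exp t ^ k := by
          rw [Finset.mul_sum]
      _ = Real.exp (t/2) * ((Real.exp β - 1) / (Real.exp t - 1)) := by
          rw [geom_sum_eq hne, ← Real.exp_nat_mul, htN]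
  rw [hsum]
  have hE : Real.exp (t/2) * (Real.exp (t/2) - Real.exp (-(t/2))) = Real.exp t - 1 := by
    rw [mul_sub, ← Real.exp_add, ← Real.exp_add]
    norm_num
  rw [← htN]
  field_simp
  linear_combination (-(Real.exp ((N:ℝ)*t) - 1)) * hE

theorem pc_approx_linear_logpart_error (d N : ℕ) (hd : 1 ≤ d) (hN : 1 ≤ N) (β : ℝ)
    (f gn : (Fin d → ℝ) → ℝ)
    (hf : ∀ x, f x = β * ∑ i, x i)
    (hg : ∀ x, gn x = β * ∑ i,
      (((min ⌊(N : ℝ) * x i⌋₊ (N - 1) : ℕ) : ℝ) + 1 / 2) / (N : ℝ)) :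
    logPart f - logPart gn = (d : ℝ) * rFun (β / N) := by
  have hN0 : (0:ℝ) < N := by exact_mod_cast hN
  have hNne : (N:ℝ) ≠ 0 := hN0.ne'
  have hZf : partZ f = (∫ t in Set.Icc (0:ℝ) 1, Real.exp (β * t)) ^ d := by
    have h : ∀ x : Fin d → ℝ, Real.exp (f x) = ∏ i, Real.exp (β * x i) := fun x => by
      rw [hf, Finset.mul_sum, Real.exp_sum]
    simp_rw [partZ, h]
    exact cube_integral_pow d fun t => Real.exp (β * t)
  have hZg : partZ gn
      = (∫ t in Set.Icc (0:ℝ) 1,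
          Real.exp (β * ((((min ⌊(N:ℝ)*t⌋₊ (N-1) : ℕ):ℝ) + 1/2)/N))) ^ d := by
    have h : ∀ x : Fin d → ℝ, Real.exp (gn x)
        = ∏ i, Real.exp (β * ((((min ⌊(N:ℝ)*(x i)⌋₊ (N-1) : ℕ):ℝ) + 1/2)/N)) := fun x => by
      rw [hg, Finset.mul_sum, Real.exp_sum]
    simp_rw [partZ, h]
    exact cube_integral_pow d fun t =>
      Real.exp (β * ((((min ⌊(N:ℝ)*t⌋₊ (N-1) : ℕ):ℝ) + 1/2)/N))
  rw [oneD_pc N hN β] at hZg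
  by_cases hβ : β = 0
  · subst hβ
    have hA : (∫ t in Set.Icc (0:ℝ) 1, Real.exp (0 * t)) = 1 := by
      simp [Real.volume_Icc]
    have hS : (∑ k ∈ Finset.range N, Real.exp (0 * (((k:ℝ) + 1/2)/N)) / N) = 1 := by
      simp [Finset.sum_const, Finset.card_range]
      field_simp
    have hr : rFun (0 / (N:ℝ)) = 0 := by
      simp [rFun, Real.volume_Icc]
      norm_num
    rw [logPart, logPart, hZf, hZg, hA, hS, hr, one_pow]
    simp
  · have key := key_identity N hN β hβ
    have hS0 : 0 < ∑ k ∈ Finset.range N, Real.exp (β * (((k:ℝ) + 1/2)/N)) / N :=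
      Finset.sum_pos (fun k _ => by positivity) ⟨0, Finset.mem_range.mpr (by omega)⟩
    have htne : β / (N:ℝ) ≠ 0 := div_ne_zero hβ hNne
    have hI0 : 0 < (Real.exp (β/N/2) - Real.exp (-(β/N/2))) / (β/N) := by
      rcases lt_or_gt_of_ne htne with h | h
      · apply div_pos_of_neg_of_neg _ h
        rw [sub_neg]
        exact Real.exp_lt_exp.mpr (by linarith)
      · apply div_pos _ h
        rw [sub_pos]
        exact Real.exp_lt_exp.mpr (by linarith)
    have hr : rFun (β / N) = Real.log ((Real.exp (β/N/2) - Real.exp (-(β/N/2))) / (β/N)) := by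
      rw [rFun, oneD_I (β/N) htne]
    rw [logPart, logPart, hZf, hZg, Real.log_pow, Real.log_pow, hr, oneD_lin β hβ, key,
      Real.log_mul hS0.ne' hI0.ne']
    ring
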